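/- Let (g,•) be a finite-dimensional real left Leibniz algebra with an L-invariant metric ⟨,⟩. Then: (i) Leib(g)^⊥ = {u ∈ g : ⟨v•u,w⟩ + ⟨v,w•u⟩ = 0 for all v,w ∈ g}; (ii) Leib(g)^⊥ is a left ideal of g; (iii) I := Leib(g) + Leib(g)^⊥ is an ideal of g (g•I ⊆ I and I•g ⊆ I); and (iv) x•y = 0 for all x ∈ I and y ∈ I^⊥ = Leib(g) ∩ Leib(g)^⊥. -/

import Mathlib

/-- The orthogonal of a submodule with respect to a bilinear form. -/
def bilinPerp {V : Type*} [AddCommGroup V] [Module ℝ V]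
    (B : V →ₗ[ℝ] V →ₗ[ℝ] ℝ) (W : Submodule ℝ V) : Submodule ℝ V where
  carrier := {u | ∀ x ∈ W, B u x = 0}
  add_mem' := by
    intro a b ha hb x hx
    simp [map_add, LinearMap.add_apply, ha x hx, hb x hx]
  zero_mem' := by
    intro x hx
    simp
  smul_mem' := by
    intro c a ha x hx
    simp [map_smul, LinearMap.smul_apply, ha x hx]

/-- In a left Leibniz algebra with an L-invariant metric:
(i) `Leib(g)^⊥ = {u : ⟨v•u,w⟩ + ⟨v,w•u⟩ = 0 ∀ v w}`; (ii) `Leib(g)^⊥` is a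
left ideal; (iii) `I = Leib(g) + Leib(g)^⊥` is an ideal; (iv)
`I^⊥ = Leib(g) ∩ Leib(g)^⊥` and `x•y = 0` for `x ∈ I`, `y ∈ I^⊥`. -/
theorem leib_perp_L_invariant {V : Type*} [AddCommGroup V]
    [Module ℝ V] [FiniteDimensional ℝ V]
    (mul : V →ₗ[ℝ] V →ₗ[ℝ] V)
    (hleib : ∀ u v w, mul u (mul v w) = mul (mul u v) w + mul v (mul u w))
    (B : V →ₗ[ℝ] V →ₗ[ℝ] ℝ)
    (hsymm : ∀ u v, B u v = B v u)
    (hnd : ∀ u, (∀ v, B u v = 0) → u = 0)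
    (hL : ∀ u v w, B (mul u v) w + B v (mul u w) = 0)
    (Leib : Submodule ℝ V)
    (hLeib : Leib = Submodule.span ℝ {x | ∃ a b, x = mul a b + mul b a}) :
    ((bilinPerp B Leib : Set V) =
        {u | ∀ v w, B (mul v u) w + B v (mul w u) = 0}) ∧
    (∀ u, ∀ y ∈ bilinPerp B Leib, mul u y ∈ bilinPerp B Leib) ∧
    ((∀ u, ∀ x ∈ Leib ⊔ bilinPerp B Leib, mul u x ∈ Leib ⊔ bilinPerp B Leib) ∧
     (∀ x ∈ Leib ⊔ bilinPerp B Leib, ∀ u, mul x u ∈ Leib ⊔ bilinPerp B Leib)) ∧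
    (bilinPerp B (Leib ⊔ bilinPerp B Leib) = Leib ⊓ bilinPerp B Leib ∧
     ∀ x ∈ Leib ⊔ bilinPerp B Leib, ∀ y ∈ bilinPerp B (Leib ⊔ bilinPerp B Leib),
       mul x y = 0) := by
  -- generators of Leib
  have hgen : ∀ a b, mul a b + mul b a ∈ Leib := by
    intro a b; rw [hLeib]; exact Submodule.subset_span ⟨a, b, rfl⟩
  -- a linear functional vanishing on generators vanishes on Leib
  have hspan : ∀ (f : V →ₗ[ℝ] ℝ), (∀ a b, f (mul a b + mul b a) = 0) →
      ∀ x ∈ Leib, f x = 0 := by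
    intro f hf x hx
    rw [hLeib] at hx
    have hle : Submodule.span ℝ {x | ∃ a b, x = mul a b + mul b a} ≤ LinearMap.ker f := by
      rw [Submodule.span_le]
      rintro x ⟨a, b, rfl⟩
      exact hf a b
    exact hle hx
  -- elements of Leib annihilate on the left
  have hmul0 : ∀ x ∈ Leib, ∀ u, mul x u = 0 := by
    intro x hx u
    rw [hLeib] at hx
    have hle : Submodule.span ℝ {x | ∃ a b, x = mul a b + mul b a}
        ≤ LinearMap.ker (mul.flip u) := by
      rw [Submodule.span_le]
      rintro x ⟨a, b, rfl⟩
      have e1 := hleib a b u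
      have e2 := hleib b a u
      have f1 : mul (mul a b) u = mul a (mul b u) - mul b (mul a u) := by
        rw [e1]; abel
      have f2 : mul (mul b a) u = mul b (mul a u) - mul a (mul b u) := by
        rw [e2]; abel
      show mul.flip u (mul a b + mul b a) = 0
      simp only [LinearMap.flip_apply, map_add, LinearMap.add_apply]
      rw [f1, f2]; abel
    have := hle hx
    simpa using this
  -- Leib is a left ideal
  have hLeibIdeal : ∀ u, ∀ x ∈ Leib, mul u x ∈ Leib := by
    intro u x hx
    have hx' : x ∈ Submodule.span ℝ {x | ∃ a b, x = mul a b + mul b a} := hLeib ▸ hx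
    have hle : Submodule.span ℝ {x | ∃ a b, x = mul a b + mul b a}
        ≤ Leib.comap (mul u) := by
      rw [Submodule.span_le]
      rintro x ⟨a, b, rfl⟩
      have key : mul u (mul a b) + mul u (mul b a)
          = (mul (mul u a) b + mul b (mul u a)) + (mul (mul u b) a + mul a (mul u b)) := by
        rw [hleib u a b, hleib u b a]; abel
      show mul u (mul a b + mul b a) ∈ Leib
      rw [map_add, key]
      exact add_mem (hgen (mul u a) b) (hgen (mul u b) a)
    exact hle hx'
  -- Leib^⊥ is a left ideal
  have hPleft : ∀ u, ∀ y ∈ bilinPerp B Leib, mul u y ∈ bilinPerp B Leib := by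
    intro u y hy x hx
    have h1 := hL u y x
    have h2 : B y (mul u x) = 0 := hy (mul u x) (hLeibIdeal u x hx)
    linarith
  -- the right-ideal property of I
  have hIright : ∀ x ∈ Leib ⊔ bilinPerp B Leib, ∀ u,
      mul x u ∈ Leib ⊔ bilinPerp B Leib := by
    intro x hx u
    rcases Submodule.mem_sup.mp hx with ⟨a, ha, b, hb, rfl⟩
    have : mul (a + b) u = mul a u + mul b u := by
      simp [map_add, LinearMap.add_apply]
    rw [this, hmul0 a ha u, zero_add]
    have hb' : mul b u = (mul b u + mul u b) - mul u b := by abel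
    rw [hb']
    exact sub_mem (Submodule.mem_sup_left (hgen b u))
      (Submodule.mem_sup_right (hPleft u b hb))
  refine ⟨?_, hPleft, ⟨?_, hIright⟩, ?_, ?_⟩
  · -- (i)
    ext u
    simp only [SetLike.mem_coe, Set.mem_setOf_eq]
    constructor
    · intro hu v w
      have h1 := hL v u w
      have h2 := hL w u v
      have h3 := hsymm v (mul w u)
      have h4 : B u (mul v w + mul w v) = 0 := hu _ (hgen v w)
      have h5 : B u (mul v w + mul w v) = B u (mul v w) + B u (mul w v) :=
        map_add (B u) _ _
      linarith
    · intro hu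
      intro x hx
      refine hspan (B u) (fun a b => ?_) x hx
      have h0 := hu a b
      have h1 := hL a u b
      have h2 := hL b u a
      have h3 := hsymm a (mul b u)
      have h5 : B u (mul a b + mul b a) = B u (mul a b) + B u (mul b a) :=
        map_add (B u) _ _
      linarith
  · -- I is a left ideal
    intro u x hx
    rcases Submodule.mem_sup.mp hx with ⟨a, ha, b, hb, rfl⟩
    rw [map_add]
    exact add_mem (Submodule.mem_sup_left (hLeibIdeal u a ha))
      (Submodule.mem_sup_right (hPleft u b hb))
  · -- I^⊥ = Leib ⊓ Leib^⊥
    have hrefl : LinearMap.BilinForm.IsRefl B := fun x y h => (hsymm y x).trans h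
    have hndB : LinearMap.BilinForm.Nondegenerate B :=
      ⟨hnd, fun y hy => hnd y (fun v => (hsymm y v).trans (hy v))⟩
    have hperp_eq : ∀ W : Submodule ℝ V,
        bilinPerp B W = LinearMap.BilinForm.orthogonal B W := by
      intro W
      ext u
      constructor
      · intro h n hn
        show B n u = 0
        rw [hsymm]; exact h n hn
      · intro h x hx
        rw [hsymm]; exact h x hx
    have hPP : bilinPerp B (bilinPerp B Leib) = Leib := by
      rw [hperp_eq, hperp_eq]
      exact LinearMap.BilinForm.orthogonal_orthogonal hndB hrefl Leib
    have hsup : bilinPerp B (Leib ⊔ bilinPerp B Leib)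
        = bilinPerp B Leib ⊓ bilinPerp B (bilinPerp B Leib) := by
      ext u
      constructor
      · intro h
        exact ⟨fun x hx => h x (Submodule.mem_sup_left hx),
          fun x hx => h x (Submodule.mem_sup_right hx)⟩
      · rintro ⟨h1, h2⟩ x hx
        rcases Submodule.mem_sup.mp hx with ⟨a, ha, b, hb, rfl⟩
        rw [map_add, h1 a ha, h2 b hb, add_zero]
    rw [hsup, hPP, inf_comm]
  · -- multiplication I · I^⊥ = 0
    intro x hx y hy
    apply hnd
    intro w
    have h1 := hL x y w
    have h2 : B y (mul x w) = 0 := hy (mul x w) (hIright x hx w)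
    have h3 := hsymm (mul x y) w
    have h4 := hsymm y (mul x w)
    -- B (mul x y) w = 0
    linarith
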